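/- In the group Br_{2g+2} acting on (ℤ/2ℤ)^{2g+2} via permuting the generators v_1,…,v_{2g+2} (the reduced Burau representation at t = −1 reduced mod 2), the image of the braid group in SL_{2g+1}(ℤ/2ℤ) is isomorphic to the symmetric group S_{2g+2}. -/

import Mathlib

open Matrix

namespace BurauAux

variable {N : ℕ}

/-- The mod-2 Burau matrix of a permutation of `Fin (N+1)`, in the basis `C_i = e_i + e_{i+1}`. -/
def bur (σ : Equiv.Perm (Fin (N + 1))) : Matrix (Fin N) (Fin N) (ZMod 2) :=
  Matrix.of fun j i =>
    (if (σ i.castSucc).val ≤ j.val then 1 else 0) +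
      (if (σ i.succ).val ≤ j.val then 1 else 0)

lemma bur_apply (σ : Equiv.Perm (Fin (N + 1))) (j i : Fin N) :
    bur σ j i = (if (σ i.castSucc).val ≤ j.val then 1 else 0) +
      (if (σ i.succ).val ≤ j.val then 1 else 0) := rfl

lemma bur_one : bur (1 : Equiv.Perm (Fin (N + 1))) = 1 := by
  funext j i
  rw [bur_apply, Matrix.one_apply]
  rw [Equiv.Perm.one_apply, Equiv.Perm.one_apply, Fin.coe_castSucc, Fin.val_succ]
  by_cases hji : j = i
  · subst hji
    rw [if_pos rfl, if_pos (le_refl _), if_neg (by omega), add_zero]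
  · rw [if_neg hji]
    have hne : j.val ≠ i.val := fun e => hji (Fin.ext e)
    by_cases h1 : i.val ≤ j.val
    · rw [if_pos h1, if_pos (by omega)]; decide
    · rw [if_neg h1, if_neg (by omega), add_zero]

lemma tele (h : ℕ → ZMod 2) : ∀ b a, a ≤ b →
    (∑ k ∈ Finset.Ico a b, (h k + h (k + 1))) = h a + h b := by
  intro b
  induction b with
  | zero =>
    intro a ha
    have : a = 0 := by omega
    subst this
    simp [CharTwo.add_self_eq_zero]
  | succ b ih =>
    intro a ha
    rcases Nat.lt_or_ge a (b + 1) with h1 | h1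
    · have ha' : a ≤ b := by omega
      rw [Finset.sum_Ico_succ_top ha', ih a ha', add_assoc, ← add_assoc (h b),
        CharTwo.add_self_eq_zero, zero_add]
    · have : a = b + 1 := by omega
      subst this
      simp [CharTwo.add_self_eq_zero]

lemma bur_sum (σ : Equiv.Perm (Fin (N + 1))) (j : Fin N) (a : Fin (N + 1)) :
    (∑ k : Fin N, if a.val ≤ k.val then bur σ j k else 0)
      = (if (σ a).val ≤ j.val then 1 else 0)
        + (if (σ (Fin.last N)).val ≤ j.val then 1 else 0) := by
  set h : ℕ → ZMod 2 :=
    fun t => if ht : t < N + 1 then (if (σ ⟨t, ht⟩).val ≤ j.val then 1 else 0) else 0 with hh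
  have hbur : ∀ k : Fin N, bur σ j k = h k.val + h (k.val + 1) := by
    intro k
    have h1 : k.val < N + 1 := by omega
    have h2 : k.val + 1 < N + 1 := by omega
    have e1 : (⟨k.val, h1⟩ : Fin (N + 1)) = k.castSucc := rfl
    have e2 : (⟨k.val + 1, h2⟩ : Fin (N + 1)) = k.succ := rfl
    simp only [hh, dif_pos h1, dif_pos h2, e1, e2, bur, Matrix.of_apply]
  calc (∑ k : Fin N, if a.val ≤ k.val then bur σ j k else 0)
      = ∑ k : Fin N, (fun t => if a.val ≤ t then h t + h (t + 1) else 0) k.val := by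
        refine Finset.sum_congr rfl fun k _ => ?_
        simp only [hbur]
    _ = ∑ t ∈ Finset.range N, (if a.val ≤ t then h t + h (t + 1) else 0) :=
        Fin.sum_univ_eq_sum_range (fun t => if a.val ≤ t then h t + h (t + 1) else 0) N
    _ = ∑ t ∈ Finset.Ico a.val N, (h t + h (t + 1)) := by
        rw [← Finset.sum_filter]
        congr 1
        ext t
        simp only [Finset.mem_filter, Finset.mem_range, Finset.mem_Ico]
        omega
    _ = h a.val + h N := tele h N a.val a.is_le
    _ = _ := by
        have h1 : a.val < N + 1 := a.isLt
        have h2 : N < N + 1 := by omega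
        have e1 : (⟨a.val, h1⟩ : Fin (N + 1)) = a := rfl
        have e2 : (⟨N, h2⟩ : Fin (N + 1)) = Fin.last N := rfl
        simp only [hh, dif_pos h1, dif_pos h2, e1, e2]

lemma bur_mul (σ τ : Equiv.Perm (Fin (N + 1))) : bur (σ * τ) = bur σ * bur τ := by
  funext j i
  rw [Matrix.mul_apply]
  have hexp : ∀ k, bur σ j k * bur τ k i
      = (if (τ i.castSucc).val ≤ k.val then bur σ j k else 0)
        + (if (τ i.succ).val ≤ k.val then bur σ j k else 0) := by
    intro k
    rw [bur_apply τ k i, mul_add]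
    congr 1 <;> split_ifs <;> simp
  simp only [hexp]
  rw [Finset.sum_add_distrib, bur_sum, bur_sum, bur_apply]
  simp only [Equiv.Perm.mul_apply]
  rw [add_add_add_comm, CharTwo.add_self_eq_zero, add_zero]
  rfl

lemma bur_det (σ : Equiv.Perm (Fin (N + 1))) : (bur σ).det = 1 := by
  have h := congrArg Matrix.det (bur_mul σ σ⁻¹)
  rw [mul_inv_cancel, bur_one, Matrix.det_one, Matrix.det_mul] at h
  have key : ∀ a b : ZMod 2, 1 = a * b → a = 1 := by decide
  exact key _ _ h

lemma bur_eq_one (hN : 2 ≤ N) (σ : Equiv.Perm (Fin (N + 1))) (h : bur σ = 1) : σ = 1 := by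
  have C : ∀ j i : Fin N,
      ((if (σ i.castSucc).val ≤ j.val then 1 else 0)
        + (if (σ i.succ).val ≤ j.val then (1 : ZMod 2) else 0))
        = if j = i then 1 else 0 := by
    intro j i
    have := congrFun (congrFun h j) i
    rwa [Matrix.one_apply] at this
  have P : ∀ i : Fin N,
      ((σ i.castSucc).val = i.val ∧ (σ i.succ).val = i.val + 1) ∨
      ((σ i.castSucc).val = i.val + 1 ∧ (σ i.succ).val = i.val) := by
    intro i
    set a := (σ i.castSucc).val with ha
    set b := (σ i.succ).val with hb
    have hab : a ≠ b := by
      intro e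
      have e2 := σ.injective (Fin.ext e)
      have : i.val = i.val + 1 := by
        have := congrArg Fin.val e2
        simpa using this
      omega
    have haN : a ≤ N := (σ i.castSucc).is_le
    have hbN : b ≤ N := (σ i.succ).is_le
    have key : ∀ x y : ℕ, x ≤ i.val → i.val < y → y ≤ N →
        (∀ j : Fin N, ((if x ≤ j.val then 1 else 0)
          + (if y ≤ j.val then (1 : ZMod 2) else 0)) = if j = i then 1 else 0) →
        x = i.val ∧ y = i.val + 1 := by
      intro x y hx hy hyN hj
      have hiN : i.val < N := i.isLt
      constructor
      · have hxN : x < N := by omega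
        have h0 := hj ⟨x, hxN⟩
        rw [if_pos (le_refl x), if_neg (by simp; omega)] at h0
        by_cases he : (⟨x, hxN⟩ : Fin N) = i
        · have := congrArg Fin.val he; simpa using this
        · rw [if_neg he] at h0
          exact absurd h0 (by decide)
      · by_contra hne
        have hy1 : i.val + 1 < y := by omega
        have h1N : i.val + 1 < N := by omega
        have h0 := hj ⟨i.val + 1, h1N⟩
        rw [if_pos (by simp; omega), if_neg (by simp; omega),
          if_neg (by simp [Fin.ext_iff])] at h0
        exact absurd h0 (by decide)
    have hxor : (a ≤ i.val ∧ i.val < b) ∨ (b ≤ i.val ∧ i.val < a) := by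
      have hC := C i i
      rw [if_pos rfl] at hC
      by_cases h1 : a ≤ i.val <;> by_cases h2 : b ≤ i.val
      · rw [if_pos h1, if_pos h2] at hC; exact absurd hC (by decide)
      · exact Or.inl ⟨h1, by omega⟩
      · exact Or.inr ⟨h2, by omega⟩
      · rw [if_neg h1, if_neg h2] at hC; exact absurd hC (by decide)
    rcases hxor with ⟨h1, h2⟩ | ⟨h1, h2⟩
    · rcases key a b h1 h2 hbN (fun j => C j i) with ⟨e1, e2⟩
      exact Or.inl ⟨e1, e2⟩
    · rcases key b a h1 h2 haN (fun j => (add_comm _ _).trans (C j i)) with ⟨e1, e2⟩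
      exact Or.inr ⟨e2, e1⟩
  have hint : ∀ k : Fin (N + 1), 1 ≤ k.val → k.val < N → σ k = k := by
    intro k h1 h2
    have p1 := P ⟨k.val - 1, by omega⟩
    have p2 := P ⟨k.val, h2⟩
    have e1 : (⟨k.val - 1, by omega⟩ : Fin N).succ = k := by
      apply Fin.ext; simp [Fin.val_succ]; omega
    have e2 : (⟨k.val, h2⟩ : Fin N).castSucc = k := by
      apply Fin.ext; simp
    rw [e1] at p1
    rw [e2] at p2
    apply Fin.ext
    simp only at p1 p2
    omega
  have h1N : 1 < N + 1 := by omega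
  have h0N : 0 < N := by omega
  have hσ1 : σ ⟨1, h1N⟩ = ⟨1, h1N⟩ := hint ⟨1, h1N⟩ (le_refl 1) (by omega : (1 : ℕ) < N)
  have h0 : σ ⟨0, by omega⟩ = ⟨0, by omega⟩ := by
    have p := P ⟨0, h0N⟩
    have e1 : (⟨0, h0N⟩ : Fin N).castSucc = (⟨0, by omega⟩ : Fin (N + 1)) := rfl
    have e2 : (⟨0, h0N⟩ : Fin N).succ = (⟨1, h1N⟩ : Fin (N + 1)) := rfl
    rw [e1, e2, hσ1] at p
    simp only at p
    rcases p with ⟨pa, _⟩ | ⟨_, pb⟩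
    · exact Fin.ext pa
    · exfalso
      have : (1 : ℕ) = 0 := pb
      omega
  have hlast : σ (Fin.last N) = Fin.last N := by
    have hm : N - 1 < N := by omega
    have p := P ⟨N - 1, hm⟩
    have e1 : (⟨N - 1, hm⟩ : Fin N).succ = Fin.last N :=
      Fin.ext (by omega : N - 1 + 1 = N)
    have e2 : (⟨N - 1, hm⟩ : Fin N).castSucc = (⟨N - 1, by omega⟩ : Fin (N + 1)) := rfl
    have hmid : σ (⟨N - 1, by omega⟩ : Fin (N + 1)) = ⟨N - 1, by omega⟩ :=
      hint ⟨N - 1, by omega⟩ (by omega : 1 ≤ N - 1) (by omega : N - 1 < N)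
    rw [e1, e2, hmid] at p
    simp only [Fin.val_last] at p
    rcases p with ⟨_, pb⟩ | ⟨pa, _⟩
    · apply Fin.ext
      rw [pb]
      show N - 1 + 1 = N
      omega
    · exfalso
      have : N - 1 = N - 1 + 1 := pa
      omega
  apply Equiv.ext
  intro k
  simp only [Equiv.Perm.coe_one, id_eq]
  rcases Nat.lt_or_ge k.val 1 with hk | hk
  · have : k = (⟨0, by omega⟩ : Fin (N + 1)) := Fin.ext (show k.val = 0 by omega)
    rw [this]; exact h0
  rcases Nat.lt_or_ge k.val N with hk2 | hk2
  · exact hint k hk hk2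
  · have : k = Fin.last N := Fin.ext (by show k.val = N; omega)
    rw [this]; exact hlast

lemma bur_swap (r : Fin N) :
    bur (Equiv.swap r.castSucc r.succ) =
      Matrix.of (fun j i : Fin N =>
        if i = j then 1
        else if j = r ∧ (i.val = r.val + 1 ∨ i.val + 1 = r.val) then 1 else 0) := by
  funext j i
  simp only [bur, Matrix.of_apply, Equiv.swap_apply_def, apply_ite Fin.val,
    Fin.ext_iff, Fin.coe_castSucc, Fin.val_succ]
  split_ifs <;> first | rfl | omega | decide

def phi (N : ℕ) : Equiv.Perm (Fin (N + 1)) →* Matrix.SpecialLinearGroup (Fin N) (ZMod 2) :=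
  MonoidHom.mk' (fun σ => ⟨bur σ, bur_det σ⟩) (fun σ τ => Subtype.ext (bur_mul σ τ))

lemma phi_injective (hN : 2 ≤ N) : Function.Injective (phi N) := by
  rw [injective_iff_map_eq_one]
  intro σ hσ
  exact bur_eq_one hN σ (congrArg Subtype.val hσ)

end BurauAux

open BurauAux

/-- The group generated by the reduced Burau matrices at `t = −1`, reduced mod 2, inside
`SL_{2g+1}(𝔽₂)`, is isomorphic to the symmetric group on `2g+2` elements. The matrix of
the elementary braid `β_r` sends the basic cycle `C_{r±1}` to `C_{r±1} + C_r` and fixes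
the other basic cycles. -/
theorem burau_mod_two_image_iso_symmetricGroup (g : ℕ) (hg : 1 ≤ g) :
    let B : Fin (2 * g + 1) → Matrix (Fin (2 * g + 1)) (Fin (2 * g + 1)) (ZMod 2) :=
      fun r j i =>
        if i = j then 1
        else if j = r ∧ (i.val = r.val + 1 ∨ i.val + 1 = r.val) then 1 else 0
    let S : Set (Matrix.SpecialLinearGroup (Fin (2 * g + 1)) (ZMod 2)) :=
      {A | ∃ r, (A : Matrix (Fin (2 * g + 1)) (Fin (2 * g + 1)) (ZMod 2)) = B r}
    Nonempty (↥(Subgroup.closure S) ≃* Equiv.Perm (Fin (2 * g + 2))) := by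
  intro B S
  have hN : 2 ≤ 2 * g + 1 := by omega
  set φ : Equiv.Perm (Fin (2 * g + 1 + 1)) →*
      Matrix.SpecialLinearGroup (Fin (2 * g + 1)) (ZMod 2) := phi (2 * g + 1) with hφ
  have hrange : φ.range = Subgroup.closure S := by
    apply le_antisymm
    · rintro x ⟨σ, rfl⟩
      have hσ : σ ∈ Submonoid.closure
          (Set.range fun i : Fin (2 * g + 1) => Equiv.swap i.castSucc i.succ) := by
        rw [Equiv.Perm.mclosure_swap_castSucc_succ]
        trivial
      refine Submonoid.closure_induction (fun x hx => ?_) ?_ (fun x y _ _ hx hy => ?_) hσ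
      · obtain ⟨r, rfl⟩ := hx
        exact Subgroup.subset_closure ⟨r, bur_swap r⟩
      · rw [_root_.map_one]; exact Subgroup.one_mem _
      · rw [_root_.map_mul]; exact Subgroup.mul_mem _ hx hy
    · rw [Subgroup.closure_le]
      rintro A ⟨r, hr⟩
      exact ⟨Equiv.swap r.castSucc r.succ, Subtype.ext ((bur_swap r).trans hr.symm)⟩
  exact ⟨((MonoidHom.ofInjective (phi_injective hN)).trans
    (MulEquiv.subgroupCongr hrange)).symm⟩
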